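/- Let k be a field and let A be a locally finite ℕ-graded k-algebra with A_{≥1} ≠ 0. If A is projectively simple, then A is a finitely generated k-algebra. -/

import Mathlib

/-!
STATEMENT 0: Let `k` be a field and `A` a locally finite ℕ-graded `k`-algebra with
`A_{≥1} ≠ 0`.  If `A` is projectively simple then `A` is a finitely generated `k`-algebra.
-/

/-- The underlying `k`-submodule of a two-sided ideal of a `k`-algebra. -/
def TwoSidedIdeal.ksub (k : Type*) {A : Type*} [CommSemiring k] [Ring A] [Algebra k A]
    (I : TwoSidedIdeal A) : Submodule k A where
  carrier := I
  add_mem' := fun ha hb => I.add_mem ha hb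
  zero_mem' := I.zero_mem
  smul_mem' := fun c x hx => by
    rw [Algebra.smul_def]
    exact I.mul_mem_left _ _ hx

/-- A locally finite ℕ-graded `k`-algebra `A` is *projectively simple* if
`dim_k A = ∞` and `dim_k A/I < ∞` for every nonzero graded two-sided ideal `I` of `A`
(graded meaning that `I` contains all homogeneous components of its elements, i.e.
`I = ⊕ₙ (I ∩ Aₙ)`). -/
def ProjectivelySimple (k : Type*) {A : Type*} [Field k] [Ring A] [Algebra k A]
    (𝒜 : ℕ → Submodule k A) [GradedAlgebra 𝒜] : Prop :=
  ¬ FiniteDimensional k A ∧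
  ∀ I : TwoSidedIdeal A, I ≠ ⊥ →
    (∀ x ∈ I, ∀ n, (DirectSum.decompose 𝒜 x n : A) ∈ I) →
    FiniteDimensional k (A ⧸ I.ksub k)

theorem projectively_simple_finitely_generated
    (k : Type*) {A : Type*} [Field k] [Ring A] [Algebra k A]
    (𝒜 : ℕ → Submodule k A) [GradedAlgebra 𝒜]
    (hlf : ∀ n, FiniteDimensional k (𝒜 n))
    (hm : ∃ n, 1 ≤ n ∧ 𝒜 n ≠ ⊥)
    (hps : ProjectivelySimple k 𝒜) :
    Algebra.FiniteType k A := by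
  classical
  obtain ⟨n₀, hn₀1, hn₀⟩ := hm
  have htop : (⨆ i, 𝒜 i : Submodule k A) = ⊤ :=
    (DirectSum.Decomposition.isInternal 𝒜).submodule_iSup_eq_top
  set m : Submodule k A := ⨆ i : ℕ, 𝒜 (i + 1) with hmdef
  have hAm : ∀ i, 1 ≤ i → 𝒜 i ≤ m := by
    intro i hi
    obtain ⟨j, rfl⟩ : ∃ j, i = j + 1 := ⟨i - 1, by omega⟩
    exact le_iSup (fun j => 𝒜 (j + 1)) j
  -- m is a two-sided ideal (as a submodule)
  have hmul_left : ∀ (a x : A), x ∈ m → a * x ∈ m := by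
    intro a x hx
    have ha : a ∈ ⨆ i, 𝒜 i := htop ▸ Submodule.mem_top
    refine Submodule.iSup_induction (motive := fun a => a * x ∈ m) _ ha ?_ ?_ ?_
    · intro i a hai
      refine Submodule.iSup_induction (motive := fun x => a * x ∈ m) _ hx ?_ ?_ ?_
      · intro j y hy
        exact hAm (i + (j + 1)) (by omega) (SetLike.mul_mem_graded hai hy)
      · show a * (0:A) ∈ m; rw [mul_zero]; exact m.zero_mem
      · intro y z hy hz; show a * (y + z) ∈ m; rw [mul_add]; exact m.add_mem hy hz
    · show (0:A) * x ∈ m; rw [zero_mul]; exact m.zero_mem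
    · intro b c hb hc; show (b + c) * x ∈ m; rw [add_mul]; exact m.add_mem hb hc
  have hmul_right : ∀ (a x : A), x ∈ m → x * a ∈ m := by
    intro a x hx
    have ha : a ∈ ⨆ i, 𝒜 i := htop ▸ Submodule.mem_top
    refine Submodule.iSup_induction (motive := fun a => x * a ∈ m) _ ha ?_ ?_ ?_
    · intro i a hai
      refine Submodule.iSup_induction (motive := fun x => x * a ∈ m) _ hx ?_ ?_ ?_
      · intro j y hy
        exact hAm (j + 1 + i) (by omega) (SetLike.mul_mem_graded hy hai)
      · show (0:A) * a ∈ m; rw [zero_mul]; exact m.zero_mem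
      · intro y z hy hz; show (y + z) * a ∈ m; rw [add_mul]; exact m.add_mem hy hz
    · show x * (0:A) ∈ m; rw [mul_zero]; exact m.zero_mem
    · intro b c hb hc; show x * (b + c) ∈ m; rw [mul_add]; exact m.add_mem hb hc
  -- m*m is a two-sided ideal
  have hmmL : ∀ (a x : A), x ∈ m * m → a * x ∈ m * m := by
    intro a x hx
    refine Submodule.mul_induction_on (C := fun x => a * x ∈ m * m) hx ?_ ?_
    · intro y hy z hz
      rw [← mul_assoc]
      exact Submodule.mul_mem_mul (hmul_left a y hy) hz
    · intro y z hy hz; rw [mul_add]; exact Submodule.add_mem _ hy hz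
  have hmmR : ∀ (a x : A), x ∈ m * m → x * a ∈ m * m := by
    intro a x hx
    refine Submodule.mul_induction_on (C := fun x => x * a ∈ m * m) hx ?_ ?_
    · intro y hy z hz
      rw [mul_assoc]
      exact Submodule.mul_mem_mul hy (hmul_right a z hz)
    · intro y z hy hz; rw [add_mul]; exact Submodule.add_mem _ hy hz
  -- the homogeneous pieces of m*m
  set E : ℕ → Submodule k A := fun n => ⨆ (i : ℕ) (_ : 0 < i ∧ i < n), 𝒜 i * 𝒜 (n - i)
    with hEdef
  have hE_le_mm : ∀ n, E n ≤ m * m := by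
    intro n
    exact iSup_le fun i => iSup_le fun hi =>
      mul_le_mul' (hAm i hi.1) (hAm (n - i) (by omega))
  have hE_mem : ∀ {i n : ℕ}, (0 < i ∧ i < n) → ∀ {x : A}, x ∈ 𝒜 i * 𝒜 (n - i) → x ∈ E n := by
    intro i n h x hx
    exact Submodule.mem_iSup_of_mem i (Submodule.mem_iSup_of_mem h hx)
  have hdec : ∀ x ∈ m * m, ∀ n, (DirectSum.decompose 𝒜 x n : A) ∈ E n := by
    intro x hx
    refine Submodule.mul_induction_on
      (C := fun x => ∀ n, (DirectSum.decompose 𝒜 x n : A) ∈ E n) hx ?_ ?_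
    · intro y hy z hz
      refine Submodule.iSup_induction
        (motive := fun y => ∀ n, (DirectSum.decompose 𝒜 (y * z) n : A) ∈ E n) _ hy ?_ ?_ ?_
      · intro i y hyi
        refine Submodule.iSup_induction
          (motive := fun z => ∀ n, (DirectSum.decompose 𝒜 (y * z) n : A) ∈ E n) _ hz ?_ ?_ ?_
        · intro j z hzj n
          have hyz : y * z ∈ 𝒜 (i + 1 + (j + 1)) := SetLike.mul_mem_graded hyi hzj
          by_cases h : i + 1 + (j + 1) = n
          · rw [DirectSum.decompose_of_mem_same 𝒜 (h ▸ hyz)]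
            refine hE_mem (⟨by omega, by omega⟩ : 0 < i + 1 ∧ i + 1 < n) ?_
            have hj : n - (i + 1) = j + 1 := by omega
            rw [hj]
            exact Submodule.mul_mem_mul hyi hzj
          · rw [DirectSum.decompose_of_mem_ne 𝒜 hyz h]
            exact (E n).zero_mem
        · intro n
          have h0 : (DirectSum.decompose 𝒜 (y * (0 : A)) n : A) = 0 := by simp
          rw [h0]; exact (E n).zero_mem
        · intro z₁ z₂ h1 h2 n
          have hadd : (DirectSum.decompose 𝒜 (y * (z₁ + z₂)) n : A)
              = (DirectSum.decompose 𝒜 (y * z₁) n : A)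
                + (DirectSum.decompose 𝒜 (y * z₂) n : A) := by
            rw [mul_add, DirectSum.decompose_add, DirectSum.add_apply, Submodule.coe_add]
          rw [hadd]; exact (E n).add_mem (h1 n) (h2 n)
      · intro n
        have h0 : (DirectSum.decompose 𝒜 ((0 : A) * z) n : A) = 0 := by simp
        rw [h0]; exact (E n).zero_mem
      · intro y₁ y₂ h1 h2 n
        have hadd : (DirectSum.decompose 𝒜 ((y₁ + y₂) * z) n : A)
            = (DirectSum.decompose 𝒜 (y₁ * z) n : A)
              + (DirectSum.decompose 𝒜 (y₂ * z) n : A) := by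
          rw [add_mul, DirectSum.decompose_add, DirectSum.add_apply, Submodule.coe_add]
        rw [hadd]; exact (E n).add_mem (h1 n) (h2 n)
    · intro y z h1 h2 n
      have hadd : (DirectSum.decompose 𝒜 (y + z) n : A)
          = (DirectSum.decompose 𝒜 y n : A) + (DirectSum.decompose 𝒜 z n : A) := by
        rw [DirectSum.decompose_add, DirectSum.add_apply, Submodule.coe_add]
      rw [hadd]; exact (E n).add_mem (h1 n) (h2 n)
  by_cases hmm0 : m * m = ⊥
  -- Degenerate case: m² = 0.  Then 𝒜 n₀ is a nonzero graded two-sided ideal with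
  -- finite-dimensional quotient, forcing A to be finite dimensional, a contradiction.
  · exfalso
    have hsplit : ∀ a : A, ∃ a₀ y, a₀ ∈ 𝒜 0 ∧ y ∈ m ∧ a₀ + y = a := by
      intro a
      have hle : (⨆ i, 𝒜 i : Submodule k A) ≤ 𝒜 0 ⊔ m := by
        refine iSup_le fun i => ?_
        cases i with
        | zero => exact le_sup_left
        | succ j => exact le_trans (le_iSup (fun j => 𝒜 (j + 1)) j) le_sup_right
      have : a ∈ 𝒜 0 ⊔ m := hle (htop ▸ Submodule.mem_top)
      obtain ⟨a₀, ha₀, y, hy, hsum⟩ := Submodule.mem_sup.mp this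
      exact ⟨a₀, y, ha₀, hy, hsum⟩
    have hJL : ∀ {a b : A}, b ∈ (𝒜 n₀ : Set A) → a * b ∈ (𝒜 n₀ : Set A) := by
      intro a b hb
      obtain ⟨a₀, y, ha₀, hy, hsum⟩ := hsplit a
      have hyb : y * b = 0 := by
        have : y * b ∈ m * m := Submodule.mul_mem_mul hy (hAm n₀ hn₀1 hb)
        rw [hmm0] at this
        exact this
      have : a * b = a₀ * b := by
        rw [← hsum, add_mul, hyb, add_zero]
      rw [this]
      have := SetLike.mul_mem_graded ha₀ hb
      rwa [zero_add] at this
    have hJR : ∀ {a b : A}, a ∈ (𝒜 n₀ : Set A) → a * b ∈ (𝒜 n₀ : Set A) := by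
      intro a b ha
      obtain ⟨b₀, y, hb₀, hy, hsum⟩ := hsplit b
      have hay : a * y = 0 := by
        have : a * y ∈ m * m := Submodule.mul_mem_mul (hAm n₀ hn₀1 ha) hy
        rw [hmm0] at this
        exact this
      have : a * b = a * b₀ := by
        rw [← hsum, mul_add, hay, add_zero]
      rw [this]
      have := SetLike.mul_mem_graded ha hb₀
      rwa [add_zero] at this
    set J : TwoSidedIdeal A := TwoSidedIdeal.mk' (𝒜 n₀ : Set A)
      ((𝒜 n₀).zero_mem) (fun ha hb => (𝒜 n₀).add_mem ha hb)
      (fun ha => (𝒜 n₀).neg_mem ha) hJL hJR with hJdef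
    have hJmem : ∀ x : A, x ∈ J ↔ x ∈ 𝒜 n₀ := fun x =>
      TwoSidedIdeal.mem_mk' _ _ _ _ _ _ x
    have hJne : J ≠ ⊥ := by
      obtain ⟨x, hx, hx0⟩ := Submodule.ne_bot_iff _ |>.mp hn₀
      intro h
      have hx' := (hJmem x).mpr hx
      rw [h, TwoSidedIdeal.mem_bot] at hx'
      exact hx0 hx'
    have hJgr : ∀ x ∈ J, ∀ n, (DirectSum.decompose 𝒜 x n : A) ∈ J := by
      intro x hx n
      have hx' : x ∈ 𝒜 n₀ := (hJmem x).mp hx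
      by_cases h : n₀ = n
      · rw [DirectSum.decompose_of_mem_same 𝒜 (h ▸ hx')]
        exact hx
      · rw [DirectSum.decompose_of_mem_ne 𝒜 hx' h]
        exact (hJmem 0).mpr (𝒜 n₀).zero_mem
    have hq := hps.2 J hJne hJgr
    have hksub : J.ksub k = 𝒜 n₀ := by
      ext x
      exact hJmem x
    rw [hksub] at hq
    have hfin : FiniteDimensional k A := by
      have h1 : IsNoetherian k (𝒜 n₀) := IsNoetherian.iff_fg.mpr (hlf n₀)
      have h2 : IsNoetherian k (A ⧸ 𝒜 n₀) := IsNoetherian.iff_fg.mpr hq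
      have := (isNoetherian_iff_submodule_quotient (𝒜 n₀)).mpr ⟨h1, h2⟩
      exact IsNoetherian.iff_fg.mp this
    exact hps.1 hfin
  -- Main case: m² ≠ 0.
  · set I : TwoSidedIdeal A := TwoSidedIdeal.mk' ((m * m : Submodule k A) : Set A)
      ((m * m).zero_mem) (fun ha hb => (m * m).add_mem ha hb)
      (fun ha => (m * m).neg_mem ha)
      (fun {a b} hb => hmmL a b hb) (fun {a b} ha => hmmR b a ha) with hIdef
    have hImem : ∀ x : A, x ∈ I ↔ x ∈ m * m := fun x =>
      TwoSidedIdeal.mem_mk' _ _ _ _ _ _ x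
    have hIne : I ≠ ⊥ := by
      obtain ⟨x, hx, hx0⟩ := Submodule.ne_bot_iff _ |>.mp hmm0
      intro h
      have hx' := (hImem x).mpr hx
      rw [h, TwoSidedIdeal.mem_bot] at hx'
      exact hx0 hx'
    have hIgr : ∀ x ∈ I, ∀ n, (DirectSum.decompose 𝒜 x n : A) ∈ I := by
      intro x hx n
      exact (hImem _).mpr (hE_le_mm n (hdec x ((hImem x).mp hx) n))
    have hq := hps.2 I hIne hIgr
    have hksub : I.ksub k = m * m := by
      ext x
      exact hImem x
    rw [hksub] at hq
    -- extract a bound N on the degrees needed to span A modulo m²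
    obtain ⟨t, ht⟩ := Module.finite_def.mp hq
    set g : (A ⧸ (m * m : Submodule k A)) → A :=
      Function.surjInv (Submodule.mkQ_surjective (m * m : Submodule k A)) with hgdef
    have hg : ∀ y, Submodule.mkQ (m * m : Submodule k A) (g y) = y := fun y =>
      Function.surjInv_eq _ y
    set N : ℕ := t.sup fun y => (DirectSum.decompose 𝒜 (g y)).support.sup id with hNdef
    set P : Submodule k A := ⨆ i : Fin (N + 1), 𝒜 (i : ℕ) with hPdef
    have hxP : ∀ x : A, (∀ i ∈ (DirectSum.decompose 𝒜 x).support, i ≤ N) → x ∈ P := by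
      intro x hx
      rw [← DirectSum.sum_support_decompose 𝒜 x]
      refine Submodule.sum_mem _ fun i hi => ?_
      exact Submodule.mem_iSup_of_mem (⟨i, Nat.lt_succ_of_le (hx i hi)⟩ : Fin (N + 1))
        (SetLike.coe_mem _)
    have hmap : Submodule.map (Submodule.mkQ (m * m : Submodule k A)) P = ⊤ := by
      rw [eq_top_iff, ← ht, Submodule.span_le]
      intro y hy
      exact ⟨g y, hxP (g y) (fun i hi =>
        le_trans (Finset.le_sup (f := id) hi)
        (Finset.le_sup (f := fun y => (DirectSum.decompose 𝒜 (g y)).support.sup id) hy)), hg y⟩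
    have hPsup : P ⊔ (m * m) = ⊤ := by
      have h1 := Submodule.comap_map_eq (Submodule.mkQ (m * m : Submodule k A)) P
      rw [hmap, Submodule.comap_top, Submodule.ker_mkQ] at h1
      exact h1.symm
    -- homogeneous generating sets for the pieces of degree ≤ N
    have hfg : ∀ i : ℕ, ∃ s : Finset A, Submodule.span k (s : Set A) = 𝒜 i := fun i =>
      (Submodule.fg_iff_finiteDimensional (𝒜 i)).mpr (hlf i)
    set sF : ℕ → Finset A := fun i => (hfg i).choose with hsFdef
    have hsF : ∀ i, Submodule.span k ((sF i : Finset A) : Set A) = 𝒜 i := fun i =>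
      (hfg i).choose_spec
    set S : Finset A := (Finset.range (N + 1)).biUnion sF with hSdef
    set T : Submodule k A := Subalgebra.toSubmodule (Algebra.adjoin k (S : Set A)) with hTdef
    have hiT : ∀ i, i ≤ N → 𝒜 i ≤ T := by
      intro i hi
      rw [← hsF i, Submodule.span_le]
      intro x hx
      have hxS : x ∈ (S : Set A) := by
        simp only [hSdef, Finset.coe_biUnion, Set.mem_iUnion, Finset.coe_range, Set.mem_Iio]
        exact ⟨i, Nat.lt_succ_of_le hi, hx⟩
      exact (Subalgebra.mem_toSubmodule _).mpr (Algebra.subset_adjoin hxS)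
    have hmain : ∀ n, ∀ x ∈ 𝒜 n, x ∈ T := by
      intro n
      induction n using Nat.strong_induction_on with
      | _ n IH =>
        intro x hx
        by_cases hn : n ≤ N
        · exact hiT n hn hx
        · have hxtop : x ∈ P ⊔ m * m := hPsup ▸ Submodule.mem_top
          obtain ⟨y, hy, z, hz, hyz⟩ := Submodule.mem_sup.mp hxtop
          have hyn : (DirectSum.decompose 𝒜 y n : A) = 0 := by
            refine Submodule.iSup_induction
              (motive := fun y => (DirectSum.decompose 𝒜 y n : A) = 0) _ hy ?_ ?_ ?_
            · intro i w hw
              exact DirectSum.decompose_of_mem_ne 𝒜 hw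
                (by have := i.isLt; omega : (i : ℕ) ≠ n)
            · simp
            · intro a b ha hb
              rw [DirectSum.decompose_add, DirectSum.add_apply, Submodule.coe_add, ha, hb,
                add_zero]
          have hx' : x = (DirectSum.decompose 𝒜 z n : A) := by
            have h1 : (DirectSum.decompose 𝒜 x n : A)
                = (DirectSum.decompose 𝒜 y n : A) + (DirectSum.decompose 𝒜 z n : A) := by
              rw [← hyz, DirectSum.decompose_add, DirectSum.add_apply, Submodule.coe_add]
            rw [← DirectSum.decompose_of_mem_same 𝒜 hx, h1, hyn, zero_add]
          have hET : E n ≤ T := by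
            refine iSup_le fun i => iSup_le fun hi => Submodule.mul_le.mpr ?_
            intro a ha b hb
            have haT : a ∈ Algebra.adjoin k (S : Set A) := IH i (by omega) a ha
            have hbT : b ∈ Algebra.adjoin k (S : Set A) := IH (n - i) (by omega) b hb
            exact (Subalgebra.mem_toSubmodule _).mpr (mul_mem haT hbT)
          rw [hx']
          exact hET (hdec z hz n)
    have hadj : Algebra.adjoin k ((S : Finset A) : Set A) = ⊤ := by
      rw [eq_top_iff]
      intro x _
      have hx : x ∈ (⨆ i, 𝒜 i : Submodule k A) := htop ▸ Submodule.mem_top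
      refine Submodule.iSup_induction (motive := fun x => x ∈ T) _ hx ?_ ?_ ?_
      · intro i x hxi
        exact hmain i x hxi
      · exact T.zero_mem
      · intro a b ha hb
        exact T.add_mem ha hb
    exact ⟨⟨S, hadj⟩⟩
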